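/- Let p > 2 be a real number. Then f(u) tends to 0 as u tends to 1 from within the open interval (0,1). -/

import Mathlib

/-- The function f from Lemma 1 of the paper. -/
noncomputable def f (p u : ℝ) : ℝ :=
  (1 - u ^ (2:ℝ)) ^ p / (1 + u ^ p) *
    ((1 + u ^ (p - 1)) ^ (p / (p - 1)) - (1 - u ^ (p - 1)) ^ (p / (p - 1))) /
    ((1 + u) ^ p * (1 - u ^ (p - 1)) ^ (p / (p - 1)) -
      (1 - u) ^ p * (1 + u ^ (p - 1)) ^ (p / (p - 1)))

theorem stmt_10 (p : ℝ) (hp : 2 < p) :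
    Filter.Tendsto (f p) (nhdsWithin 1 (Set.Ioo 0 1)) (nhds 0) := by
  classical
  set q : ℝ := p / (p - 1) with hqdef
  have hp1 : (1:ℝ) < p - 1 := by linarith
  have hq0 : 0 < q := div_pos (by linarith) (by linarith)
  have hq2 : q < 2 := by
    rw [hqdef, div_lt_iff₀ (by linarith)]; nlinarith
  set δ : ℝ := p - q with hδdef
  have hδ : 0 < δ := by
    have : q < p := lt_trans hq2 hp
    simp only [hδdef]; linarith
  -- the key auxiliary limit
  have htδ : Filter.Tendsto (fun u : ℝ => (1 - u) ^ δ)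
      (nhdsWithin 1 (Set.Ioo 0 1)) (nhds 0) := by
    have h1 : Filter.Tendsto (fun u : ℝ => 1 - u)
        (nhdsWithin 1 (Set.Ioo 0 1)) (nhds 0) := by
      have h0 : Filter.Tendsto (fun u : ℝ => 1 - u) (nhds 1) (nhds (1 - 1)) :=
        tendsto_const_nhds.sub Filter.tendsto_id
      simpa using h0.mono_left nhdsWithin_le_nhds
    have h2 : ContinuousAt (fun x : ℝ => x ^ δ) 0 :=
      Real.continuousAt_rpow_const 0 δ (Or.inr hδ.le)
    have h3 := h2.tendsto.comp h1
    simpa [Real.zero_rpow hδ.ne', Function.comp_def] using h3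
  have hbound : ∀ᶠ u in nhdsWithin 1 (Set.Ioo 0 1),
      0 ≤ f p u ∧ f p u ≤ 8 * 2 ^ p * (1 - u) ^ δ := by
    filter_upwards [self_mem_nhdsWithin,
      htδ.eventually_lt_const (show (0:ℝ) < 1/8 by norm_num)] with u hu h8
    obtain ⟨hu0, hu1⟩ := hu
    have hup : 0 < u ^ (p - 1) := Real.rpow_pos_of_pos hu0 _
    have hup1 : u ^ (p - 1) < 1 := Real.rpow_lt_one hu0.le hu1 (by linarith)
    have hupu : u ^ (p - 1) ≤ u := by
      calc u ^ (p - 1) ≤ u ^ (1:ℝ) :=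
            Real.rpow_le_rpow_of_exponent_ge hu0 hu1.le (by linarith)
        _ = u := Real.rpow_one u
    set t : ℝ := 1 - u with htdef
    have ht : 0 < t := by simp only [htdef]; linarith
    set b : ℝ := (1 - u ^ (p - 1)) ^ q with hbdef
    set c : ℝ := (1 + u ^ (p - 1)) ^ q with hcdef
    have hb0 : 0 < b := Real.rpow_pos_of_pos (by linarith) _
    have hb1 : b ≤ 1 := Real.rpow_le_one (by linarith) (by linarith) hq0.le
    have hbt : t ^ q ≤ b := by
      apply Real.rpow_le_rpow ht.le _ hq0.le
      simp only [htdef]; linarith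
    have hc1 : 1 < c := by
      exact Real.one_lt_rpow (by linarith) hq0
    have hc4 : c ≤ 4 := by
      calc c ≤ (2:ℝ) ^ q := Real.rpow_le_rpow (by linarith) (by linarith) hq0.le
        _ ≤ (2:ℝ) ^ (2:ℝ) := Real.rpow_le_rpow_of_exponent_le (by norm_num) hq2.le
        _ = 4 := by rw [Real.rpow_two]; norm_num
    have htq : 0 < t ^ q := Real.rpow_pos_of_pos ht _
    have htd0 : 0 < t ^ δ := Real.rpow_pos_of_pos ht _
    have htd : t ^ δ ≤ 1/8 := h8.le
    have htp : t ^ p = t ^ q * t ^ δ := by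
      rw [← Real.rpow_add ht]; congr 1; rw [hδdef]; ring
    -- Denominator lower bound
    have hone : (1:ℝ) ≤ (1 + u) ^ p :=
      Real.one_le_rpow (by linarith) (by linarith)
    have hD : t ^ q / 2 ≤ (1 + u) ^ p * b - t ^ p * c := by
      have h3 : t ^ q ≤ (1 + u) ^ p * b := hbt.trans (le_mul_of_one_le_left hb0.le hone)
      have h4 : t ^ p * c ≤ t ^ q / 2 := by
        rw [htp]
        calc t ^ q * t ^ δ * c ≤ t ^ q * (1/8) * 4 := by
              apply mul_le_mul _ hc4 (by linarith) (by positivity)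
              exact mul_le_mul_of_nonneg_left htd htq.le
          _ = t ^ q / 2 := by ring
      linarith
    have hDpos : 0 < (1 + u) ^ p * b - t ^ p * c := lt_of_lt_of_le (by positivity) hD
    -- Numerator upper bound
    have hu2 : (1:ℝ) - u ^ (2:ℝ) = t * (1 + u) := by
      rw [Real.rpow_two, htdef]; ring
    have hXpos : 0 < 1 - u ^ (2:ℝ) := by rw [hu2]; positivity
    have hX : (1 - u ^ (2:ℝ)) ^ p ≤ 2 ^ p * t ^ p := by
      rw [hu2]
      calc (t * (1 + u)) ^ p ≤ (t * 2) ^ p := by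
            apply Real.rpow_le_rpow (by positivity) _ (by linarith)
            nlinarith [mul_le_mul_of_nonneg_left (show u + 1 ≤ 2 by linarith) ht.le]
        _ = t ^ p * 2 ^ p := Real.mul_rpow ht.le (by norm_num)
        _ = 2 ^ p * t ^ p := by ring
    have hden1 : (1:ℝ) ≤ 1 + u ^ p := by
      have := Real.rpow_pos_of_pos hu0 p; linarith
    set X : ℝ := (1 - u ^ (2:ℝ)) ^ p with hXdef
    have hX0 : 0 < X := Real.rpow_pos_of_pos hXpos _
    have hNpos : 0 < X / (1 + u ^ p) * (c - b) := by
      apply mul_pos (div_pos hX0 (by linarith))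
      linarith
    have hN : X / (1 + u ^ p) * (c - b) ≤ 2 ^ p * t ^ p * 4 := by
      have h5 : X / (1 + u ^ p) ≤ X := by
        rw [div_le_iff₀ (by linarith)]
        nlinarith
      calc X / (1 + u ^ p) * (c - b) ≤ X * 4 := by
            apply mul_le_mul h5 (by linarith) (by linarith) hX0.le
        _ ≤ 2 ^ p * t ^ p * 4 := by linarith
    -- combine
    have hfval : f p u = X / (1 + u ^ p) * (c - b) / ((1 + u) ^ p * b - t ^ p * c) := rfl
    constructor
    · rw [hfval]
      exact div_nonneg hNpos.le hDpos.le
    · rw [hfval]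
      have step1 : X / (1 + u ^ p) * (c - b) / ((1 + u) ^ p * b - t ^ p * c)
          ≤ X / (1 + u ^ p) * (c - b) / (t ^ q / 2) :=
        div_le_div_of_nonneg_left hNpos.le (by positivity) hD
      refine step1.trans ?_
      rw [div_le_iff₀ (by positivity)]
      have : 8 * 2 ^ p * t ^ δ * (t ^ q / 2) = 2 ^ p * t ^ p * 4 := by
        rw [htp]; ring
      rw [this]
      exact hN
  refine squeeze_zero' (hbound.mono fun u h => h.1) (hbound.mono fun u h => h.2) ?_
  have := htδ.const_mul (8 * 2 ^ p : ℝ)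
  simpa using this
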